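/- For Dirichlet characters ψ and φ, a prime p not dividing the conductor of φ, and any positive integer n divisible by p, the generalized divisor sum σ_{k-1}^{ψ,φ}(n p) satisfies σ_{k-1}^{ψ,φ}(n p) + ψ(p)φ(p) p^{k-1} σ_{k-1}^{ψ,φ}(n/p) = (ψ(p) + φ(p) p^{k-1}) σ_{k-1}^{ψ,φ}(n). -/

import Mathlib

open Finset

/-- Generalised power divisor sum `σ_{k-1}^{ψ,φ}(n) = ∑_{d ∣ n} ψ(n/d) φ(d) d^{k-1}`. -/
noncomputable def gsigma {u v : ℕ} (ψ : DirichletCharacter ℂ u) (φ : DirichletCharacter ℂ v)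
    (k : ℕ) (n : ℕ) : ℂ :=
  ∑ d ∈ n.divisors, ψ ((n / d : ℕ) : ZMod u) * φ ((d : ℕ) : ZMod v) * (d : ℂ) ^ (k - 1)

private lemma filter_not_dvd_eq (p m : ℕ) (hp : p.Prime) (hm : 0 < m) :
    (m * p).divisors.filter (fun d => ¬ p ∣ d)
      = m.divisors.filter (fun d => ¬ p ∣ d) := by
  ext d
  simp only [mem_filter, Nat.mem_divisors]
  constructor
  · rintro ⟨⟨hd, _⟩, hpd⟩
    exact ⟨⟨(Nat.Coprime.symm (hp.coprime_iff_not_dvd.mpr hpd)).dvd_of_dvd_mul_right hd,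
      hm.ne'⟩, hpd⟩
  · rintro ⟨⟨hd, _⟩, hpd⟩
    exact ⟨⟨hd.mul_right p, Nat.mul_ne_zero hm.ne' hp.pos.ne'⟩, hpd⟩

private lemma filter_dvd_eq_image (p M : ℕ) (hp : 0 < p) (hpM : p ∣ M) (hM : 0 < M) :
    M.divisors.filter (fun d => p ∣ d) = (M / p).divisors.image (fun e => p * e) := by
  ext d
  simp only [mem_filter, Nat.mem_divisors, mem_image]
  constructor
  · rintro ⟨⟨hd, _⟩, e, rfl⟩
    refine ⟨e, ⟨?_, ?_⟩, rfl⟩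
    · rw [← Nat.mul_dvd_mul_iff_left hp, Nat.mul_div_cancel' hpM]
      exact hd
    · exact Nat.div_ne_zero_iff.mpr ⟨hp.ne', Nat.le_of_dvd hM hpM⟩
  · rintro ⟨e, ⟨he, _⟩, rfl⟩
    refine ⟨⟨?_, hM.ne'⟩, Dvd.intro e rfl⟩
    calc p * e ∣ p * (M / p) := Nat.mul_dvd_mul_left p he
    _ = M := Nat.mul_div_cancel' hpM

private lemma sum_filter_dvd (p M : ℕ) (hp : 0 < p) (hpM : p ∣ M) (hM : 0 < M)
    (F : ℕ → ℂ) :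
    ∑ d ∈ M.divisors.filter (fun d => p ∣ d), F d
      = ∑ e ∈ (M / p).divisors, F (p * e) := by
  rw [filter_dvd_eq_image p M hp hpM hM, Finset.sum_image]
  intro a _ b _ h
  exact Nat.eq_of_mul_eq_mul_left hp h

theorem stmt_0 {u v : ℕ} (ψ : DirichletCharacter ℂ u) (φ : DirichletCharacter ℂ v)
    (k : ℕ) (hk : 1 ≤ k) (p n : ℕ) (hp : p.Prime) (hpv : ¬ p ∣ v)
    (hn : 0 < n) (hpn : p ∣ n) :
    gsigma ψ φ k (n * p)
      + ψ ((p : ℕ) : ZMod u) * φ ((p : ℕ) : ZMod v) * (p : ℂ) ^ (k - 1)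
          * gsigma ψ φ k (n / p)
      = (ψ ((p : ℕ) : ZMod u) + φ ((p : ℕ) : ZMod v) * (p : ℂ) ^ (k - 1))
          * gsigma ψ φ k n := by
  have hp0 : 0 < p := hp.pos
  set F : ℕ → ℕ → ℂ := fun m d =>
    ψ ((m / d : ℕ) : ZMod u) * φ ((d : ℕ) : ZMod v) * (d : ℂ) ^ (k - 1) with hF
  -- split gsigma (n*p)
  have h1 : gsigma ψ φ k (n * p)
      = ∑ d ∈ n.divisors.filter (fun d => ¬ p ∣ d), F (n * p) d
        + ∑ e ∈ n.divisors, F (n * p) (p * e) := by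
    rw [gsigma, ← Finset.sum_filter_add_sum_filter_not (n * p).divisors (fun d => p ∣ d),
      filter_not_dvd_eq p n hp hn,
      sum_filter_dvd p (n * p) hp0 (Dvd.intro_left n rfl) (by positivity),
      show (n * p) / p = n by rw [Nat.mul_div_assoc n (dvd_refl p), Nat.div_self hp0, mul_one]]
    ring
  -- split gsigma n
  have h2 : gsigma ψ φ k n
      = ∑ d ∈ n.divisors.filter (fun d => ¬ p ∣ d), F n d
        + ∑ e ∈ (n / p).divisors, F n (p * e) := by
    rw [gsigma, ← Finset.sum_filter_add_sum_filter_not n.divisors (fun d => p ∣ d),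
      sum_filter_dvd p n hp0 hpn hn]
    ring
  -- rewrite each piece
  have hA : ∑ d ∈ n.divisors.filter (fun d => ¬ p ∣ d), F (n * p) d
      = ψ ((p : ℕ) : ZMod u) * ∑ d ∈ n.divisors.filter (fun d => ¬ p ∣ d), F n d := by
    rw [Finset.mul_sum]
    refine Finset.sum_congr rfl fun d hd => ?_
    simp only [mem_filter, Nat.mem_divisors] at hd
    have : (n * p) / d = (n / d) * p := by
      obtain ⟨c, rfl⟩ := hd.1.1
      rw [Nat.mul_div_cancel_left c (Nat.pos_of_ne_zero (by rintro rfl; simp at hd)),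
        mul_assoc, Nat.mul_div_cancel_left _ (Nat.pos_of_ne_zero (by rintro rfl; simp at hd))]
    rw [hF]
    simp only [this]
    push_cast
    rw [map_mul]
    ring
  have hB : ∑ e ∈ n.divisors, F (n * p) (p * e)
      = φ ((p : ℕ) : ZMod v) * (p : ℂ) ^ (k - 1) * gsigma ψ φ k n := by
    rw [gsigma, Finset.mul_sum]
    refine Finset.sum_congr rfl fun e he => ?_
    have : (n * p) / (p * e) = n / e := by
      rw [mul_comm p e, Nat.mul_div_mul_right n e hp0]
    rw [hF]
    simp only [this]
    push_cast
    rw [map_mul, mul_pow]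
    ring
  have hC : ∑ e ∈ (n / p).divisors, F n (p * e)
      = φ ((p : ℕ) : ZMod v) * (p : ℂ) ^ (k - 1) * gsigma ψ φ k (n / p) := by
    rw [gsigma, Finset.mul_sum]
    refine Finset.sum_congr rfl fun e he => ?_
    have : n / (p * e) = (n / p) / e := (Nat.div_div_eq_div_mul n p e).symm
    rw [hF]
    simp only [this]
    push_cast
    rw [map_mul, mul_pow]
    ring
  rw [h1, hA, hB]
  have h2' : ∑ d ∈ n.divisors.filter (fun d => ¬ p ∣ d), F n d
      = gsigma ψ φ k n - φ ((p : ℕ) : ZMod v) * (p : ℂ) ^ (k - 1) * gsigma ψ φ k (n / p) := by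
    rw [h2, hC]; ring
  rw [h2']
  ring
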